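/- arXiv:1808.10768 — 2 statements merged into one kernel-verified Lean document; each statement's English description precedes it below -/
import Mathlib

section
/- For every integer k ≥ 0 one has 0 < G^{(k)}(0) ≤ σᵏ, where G^{(k)}(0) is the kth derivative at 0 of G(z) = ∏_{p ≤ y, p prime} J₀(2i·√(z/p)) and σ = Σ_{p ≤ y, p prime} 1/p. -/
open MeasureTheory Real Complex Filter

/-- The set of primes `p ≤ y`. -/
noncomputable def primesLe (y : ℝ) : Finset ℕ :=
  (Finset.range (⌊y⌋₊ + 1)).filter Nat.Prime

/-- `V_y(t) = ∑_{p ≤ y} sin(t log p)/√p`. -/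
noncomputable def Vy (y t : ℝ) : ℝ :=
  ∑ p ∈ primesLe y, Real.sin (t * Real.log p) / Real.sqrt p

/-- `σ = σ(y) = ∑_{p ≤ y} 1/p`. -/
noncomputable def sigmay (y : ℝ) : ℝ := ∑ p ∈ primesLe y, (1 : ℝ) / p

/-- `J0twoISqrt w = J₀(2i√w) = ∑_{n≥0} wⁿ/(n!)²`, where `J₀` is the Bessel function of
the first kind of order 0. -/
noncomputable def J0twoISqrt (w : ℂ) : ℂ := ∑' n : ℕ, w ^ n / ((n.factorial : ℂ)) ^ 2

/-- `G(z) = ∏_{p ≤ y} J₀(2i√(z/p))`. -/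
noncomputable def Gfun (y : ℝ) (z : ℂ) : ℂ := ∏ p ∈ primesLe y, J0twoISqrt (z / (p : ℂ))

lemma summable_aux {c : ℕ → ℝ} {B : ℝ} (h : ∀ n, |c n| ≤ B ^ n / n.factorial) (z : ℂ) :
    Summable fun n => ‖(c n : ℂ) * z ^ n‖ := by
  refine Summable.of_nonneg_of_le (fun n => norm_nonneg _) (fun n => ?_)
    (Real.summable_pow_div_factorial (B * ‖z‖))
  rw [norm_mul, Complex.norm_real, norm_pow, mul_pow, Real.norm_eq_abs]
  calc |c n| * ‖z‖ ^ n ≤ (B ^ n / n.factorial) * ‖z‖ ^ n :=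
        mul_le_mul_of_nonneg_right (h n) (by positivity)
    _ = B ^ n * ‖z‖ ^ n / n.factorial := by ring

set_option maxHeartbeats 1000000 in
lemma key (S : Finset ℕ) (hS : ∀ p ∈ S, 2 ≤ p) :
    ∃ c : ℕ → ℝ, c 0 = 1 ∧ (∀ k, 0 ≤ c k) ∧
      (∀ k, (k.factorial : ℝ) * c k ≤ (∑ p ∈ S, (1:ℝ)/p) ^ k) ∧
      (S.Nonempty → ∀ k, 0 < c k) ∧
      (∀ z : ℂ, ∏ p ∈ S, J0twoISqrt (z / (p : ℂ)) = ∑' k : ℕ, (c k : ℂ) * z ^ k) := by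
  induction S using Finset.induction with
  | empty =>
    refine ⟨fun k => if k = 0 then 1 else 0, by simp, fun k => by positivity, fun k => ?_,
      by simp, fun z => ?_⟩
    · cases k with
      | zero => simp
      | succ n => simp
    · rw [Finset.prod_empty, tsum_eq_single 0 (fun b hb => by simp [hb])]
      simp
  | insert a S ha ih =>
    have ha2 : 2 ≤ a := hS a (Finset.mem_insert_self a S)
    obtain ⟨c, hc0, hcnn, hbd, _hpos, heq⟩ := ih (fun p hp => hS p (Finset.mem_insert_of_mem hp))
    have haR : (1:ℝ) ≤ (a:ℝ) := by exact_mod_cast le_trans (by norm_num) ha2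
    have haR0 : (0:ℝ) < (a:ℝ) := by linarith
    set b : ℕ → ℝ := fun j => 1 / ((j.factorial : ℝ) ^ 2 * (a:ℝ) ^ j) with hbdef
    have hbpos : ∀ j, 0 < b j := fun j => by
      have : (0:ℝ) < (j.factorial : ℝ) := by exact_mod_cast j.factorial_pos
      positivity
    have hb0 : b 0 = 1 := by simp [hbdef]
    have hfac1 : ∀ j : ℕ, (1:ℝ) ≤ (j.factorial : ℝ) := fun j => by
      exact_mod_cast j.factorial_pos
    have hbfac : ∀ j, (j.factorial : ℝ) * b j ≤ (1 / (a:ℝ)) ^ j := by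
      intro j
      have h1 : (j.factorial : ℝ) * b j = 1 / ((j.factorial : ℝ) * (a:ℝ) ^ j) := by
        simp only [hbdef]; field_simp
      rw [h1, div_pow, one_pow]
      apply one_div_le_one_div_of_le (by positivity)
      calc (a:ℝ) ^ j = 1 * (a:ℝ) ^ j := by ring
        _ ≤ (j.factorial : ℝ) * (a:ℝ) ^ j :=
          mul_le_mul_of_nonneg_right (hfac1 j) (by positivity)
    set σ : ℝ := ∑ p ∈ S, (1:ℝ)/p with hσdef
    have hσ0 : 0 ≤ σ := Finset.sum_nonneg fun p _ => by positivity
    have hcb : ∀ n, |c n| ≤ σ ^ n / n.factorial := by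
      intro n
      rw [_root_.abs_of_nonneg (hcnn n), le_div_iff₀ (by exact_mod_cast n.factorial_pos)]
      rw [mul_comm]; exact hbd n
    have hbb : ∀ n, |b n| ≤ (1:ℝ) ^ n / n.factorial := by
      intro n
      rw [_root_.abs_of_nonneg (hbpos n).le, one_pow, hbdef]
      apply one_div_le_one_div_of_le (by exact_mod_cast n.factorial_pos)
      calc (n.factorial : ℝ) = n.factorial * 1 := by ring
        _ ≤ (n.factorial : ℝ) * ((n.factorial : ℝ) * (a:ℝ)^n) := by
            apply mul_le_mul_of_nonneg_left _ (by positivity)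
            calc (1:ℝ) = 1 * 1 := by ring
              _ ≤ (n.factorial : ℝ) * (a:ℝ)^n :=
                mul_le_mul (hfac1 n) (one_le_pow₀ haR) zero_le_one (by positivity)
        _ = (n.factorial : ℝ)^2 * (a:ℝ)^n := by ring
    refine ⟨fun k => ∑ ij ∈ Finset.HasAntidiagonal.antidiagonal k, b ij.1 * c ij.2, ?_, ?_, ?_, ?_, ?_⟩
    · simp [hb0, hc0]
    · exact fun k => Finset.sum_nonneg fun ij _ => mul_nonneg (hbpos _).le (hcnn _)
    · intro k
      rw [Finset.sum_insert ha, Finset.mul_sum, Finset.Nat.sum_antidiagonal_eq_sum_range_succ_mk,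
        add_pow]
      apply Finset.sum_le_sum
      intro m hm
      have hmk : m ≤ k := Nat.lt_succ_iff.mp (Finset.mem_range.mp hm)
      have hfact : (k.factorial : ℝ) = (k.choose m : ℝ) * m.factorial * (k - m).factorial := by
        exact_mod_cast (Nat.choose_mul_factorial_mul_factorial hmk).symm
      calc (k.factorial : ℝ) * (b m * c (k - m))
          = ((m.factorial : ℝ) * b m) * (((k-m).factorial : ℝ) * c (k-m)) * (k.choose m : ℝ) := by
            rw [hfact]; ring
        _ ≤ ((1/(a:ℝ)) ^ m) * (σ ^ (k - m)) * (k.choose m : ℝ) := by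
            apply mul_le_mul_of_nonneg_right _ (by positivity)
            apply mul_le_mul (hbfac m) (hbd (k-m)) _ (by positivity)
            exact mul_nonneg (by exact_mod_cast (k-m).factorial_pos.le) (hcnn _)
        _ = (1/(a:ℝ)) ^ m * σ ^ (k - m) * (k.choose m : ℝ) := rfl
    · intro _ k
      have hmem : ((k, 0) : ℕ × ℕ) ∈ Finset.HasAntidiagonal.antidiagonal k := by simp
      refine Finset.sum_pos' (fun ij _ => mul_nonneg (hbpos _).le (hcnn _)) ⟨(k, 0), hmem, ?_⟩
      rw [hc0]
      simpa using hbpos k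
    · intro z
      have haC : ((a:ℕ) : ℂ) ≠ 0 := Nat.cast_ne_zero.mpr (by omega)
      have hJ : J0twoISqrt (z / (a : ℂ)) = ∑' n : ℕ, (b n : ℂ) * z ^ n := by
        unfold J0twoISqrt
        refine tsum_congr fun n => ?_
        have hf : ((n.factorial : ℝ) : ℂ) = (n.factorial : ℂ) := by push_cast; rfl
        rw [hbdef]
        push_cast
        rw [div_pow]
        have hfC : (n.factorial : ℂ) ≠ 0 := by exact_mod_cast n.factorial_ne_zero
        field_simp
      rw [Finset.prod_insert ha, hJ, heq z,
        tsum_mul_tsum_eq_tsum_sum_antidiagonal_of_summable_norm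
          (summable_aux hbb z) (summable_aux hcb z)]
      refine tsum_congr fun n => ?_
      push_cast
      rw [Finset.sum_mul]
      refine Finset.sum_congr rfl fun ij hij => ?_
      have hn : ij.1 + ij.2 = n := Finset.HasAntidiagonal.mem_antidiagonal.mp hij
      rw [← hn, pow_add]
      ring

/-- **Lemma 3(c)** (Ivić–Korolev). `0 < G^{(k)}(0) ≤ σᵏ` for every `k ≥ 0`. -/
theorem Gderiv_pos_le :
    ∀ y : ℝ, 2 < y → ∀ k : ℕ,
      0 < (iteratedDeriv k (Gfun y) 0).re ∧
        (iteratedDeriv k (Gfun y) 0).re ≤ (sigmay y) ^ k := by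
  intro y hy k
  have hSprime : ∀ p ∈ primesLe y, 2 ≤ p := fun p hp =>
    (Finset.mem_filter.mp hp).2.two_le
  obtain ⟨c, hc0, hcnn, hbd, hpos, heq⟩ := key (primesLe y) hSprime
  have hne : (primesLe y).Nonempty := by
    refine ⟨2, Finset.mem_filter.mpr ⟨Finset.mem_range.mpr ?_, Nat.prime_two⟩⟩
    have : (2:ℕ) ≤ ⌊y⌋₊ := Nat.le_floor (by exact_mod_cast hy.le)
    omega
  have hcpos := hpos hne
  have hσ0 : 0 ≤ sigmay y := Finset.sum_nonneg fun p _ => by positivity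
  have hcb : ∀ n, |c n| ≤ (sigmay y) ^ n / n.factorial := by
    intro n
    rw [_root_.abs_of_nonneg (hcnn n), le_div_iff₀ (by exact_mod_cast n.factorial_pos)]
    rw [mul_comm]; exact hbd n
  set p : FormalMultilinearSeries ℂ ℂ ℂ :=
    FormalMultilinearSeries.ofScalars ℂ (fun n => (c n : ℂ)) with hpdef
  have hrad : 0 < p.radius := by
    have hs : Summable fun n => |c n| := by
      simpa [Complex.norm_real] using summable_aux hcb 1
    refine lt_of_lt_of_le zero_lt_one (p.le_radius_of_summable (r := 1) ?_)
    have h2 : (fun n => ‖p n‖ * ((1:NNReal):ℝ)^n) = fun n => |c n| := by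
      funext n
      rw [hpdef, FormalMultilinearSeries.ofScalars_norm, NNReal.coe_one, one_pow, mul_one,
        Complex.norm_real, Real.norm_eq_abs]
    rw [h2]
    exact hs
  have hsum : Gfun y = p.sum := by
    funext z
    rw [Gfun, heq z, FormalMultilinearSeries.sum]
    refine tsum_congr fun n => ?_
    rw [hpdef, FormalMultilinearSeries.ofScalars_apply_eq, smul_eq_mul]
  have hG : HasFPowerSeriesOnBall (Gfun y) p 0 p.radius := by
    rw [hsum]; exact p.hasFPowerSeriesOnBall hrad
  have hder : iteratedDeriv k (Gfun y) 0 = (k.factorial : ℂ) * (c k : ℂ) := by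
    have h1 := hG.factorial_smul (1 : ℂ) k
    rw [iteratedDeriv_eq_iteratedFDeriv, ← h1, hpdef,
      FormalMultilinearSeries.ofScalars_apply_eq]
    simp [smul_eq_mul]
  rw [hder]
  have hre : ((k.factorial : ℂ) * (c k : ℂ)).re = (k.factorial : ℝ) * c k := by
    have : (k.factorial : ℂ) * (c k : ℂ) = (((k.factorial : ℝ) * c k : ℝ) : ℂ) := by push_cast; ring
    rw [this, Complex.ofReal_re]
  rw [hre]
  exact ⟨mul_pos (by exact_mod_cast k.factorial_pos) (hcpos k), hbd k⟩
end

section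
/- Let Φ_n denote the nth Taylor coefficient at 0 of Φ(z) = ∏_{p ≤ y, p prime} φ(z/p), where φ(z) = e^{−z}·J₀(2i√z). Then for every n ≥ 0 one has |Φ_n| ≤ σⁿ/n!, where σ = Σ_{p ≤ y, p prime} 1/p. -/
open MeasureTheory Real Complex Filter

/-- `φ(z) = e^{-z} J₀(2i√z)`. -/
noncomputable def phifun (z : ℂ) : ℂ := Complex.exp (-z) * J0twoISqrt z

/-- `Φ(z) = ∏_{p ≤ y} φ(z/p)`. -/
noncomputable def Phifun (y : ℝ) (z : ℂ) : ℂ := ∏ p ∈ primesLe y, phifun (z / (p : ℂ))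

/-- The `n`-th Taylor coefficient of `Φ` at `0`. -/
noncomputable def PhiCoef (y : ℝ) (n : ℕ) : ℂ := iteratedDeriv n (Phifun y) 0 / (n.factorial : ℂ)

namespace IK
open Finset


noncomputable def lagt (k : ℕ) : ℝ := (-1)^k / (k.factorial : ℝ)

noncomputable def lag (n : ℕ) : ℝ := ∑ k ∈ range (n+1), lagt k * (n.choose k : ℝ)

noncomputable def Mx (n : ℕ) : ℝ := ∑ k ∈ range (n+1), lagt (k+1) * (n.choose k : ℝ)

noncomputable def Nx (n : ℕ) : ℝ := ∑ k ∈ range (n+1), lagt k * ((n+1).choose (k+1) : ℝ)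

lemma lag_zero : lag 0 = 1 := by simp [lag, lagt]

lemma lag_one : lag 1 = 0 := by
  simp [lag, lagt, Finset.sum_range_succ]

lemma lag_succ (n : ℕ) : lag (n+1) = lag n + Mx n := by
  have h1 : lag (n+1) = lagt 0 * ((n+1).choose 0 : ℝ)
      + ∑ k ∈ range (n+1), lagt (k+1) * ((n+1).choose (k+1) : ℝ) := by
    rw [lag, Finset.sum_range_succ']
    ring
  have h2 : ∀ k ∈ range (n+1), lagt (k+1) * ((n+1).choose (k+1) : ℝ)
      = lagt (k+1) * (n.choose k : ℝ) + lagt (k+1) * (n.choose (k+1) : ℝ) := by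
    intro k _
    rw [Nat.choose_succ_succ]
    push_cast
    ring
  rw [h1, Finset.sum_congr rfl h2, Finset.sum_add_distrib]
  have h3 : lagt 0 * ((n+1).choose 0 : ℝ)
      + ∑ k ∈ range (n+1), lagt (k+1) * (n.choose (k+1) : ℝ) = lag n := by
    rw [Finset.sum_range_succ]
    simp only [Nat.choose_succ_self, Nat.cast_zero, mul_zero, add_zero]
    rw [lag, Finset.sum_range_succ']
    simp [add_comm]
  have h4 : ∑ k ∈ range (n+1), lagt (k+1) * (n.choose k : ℝ) = Mx n := rfl
  linarith [h3, h4]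

lemma Mx_eq (n : ℕ) : ((n:ℝ)+1) * Mx n = - Nx n := by
  rw [Mx, Nx, Finset.mul_sum, ← Finset.sum_neg_distrib]
  refine Finset.sum_congr rfl ?_
  intro k _
  have hc : ((n+1) * n.choose k : ℕ) = ((n+1).choose (k+1) * (k+1) : ℕ) :=
    Nat.add_one_mul_choose_eq n k
  have hc' : ((n:ℝ)+1) * (n.choose k : ℝ) = ((n+1).choose (k+1) : ℝ) * ((k:ℝ)+1) := by
    exact_mod_cast hc
  have hfac : ((k+1).factorial : ℝ) = ((k:ℝ)+1) * (k.factorial : ℝ) := by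
    rw [Nat.factorial_succ]; push_cast; ring
  rw [lagt, lagt, hfac]
  have hk : ((k:ℝ)+1) ≠ 0 := by positivity
  have hf : (k.factorial : ℝ) ≠ 0 := by
    exact_mod_cast Nat.factorial_ne_zero k
  field_simp
  rw [pow_succ]
  linear_combination (-((-1:ℝ)^k)) * hc'

lemma Nx_succ (n : ℕ) : Nx (n+1) = Nx n + lag (n+1) := by
  have h2 : ∀ k ∈ range (n+2), lagt k * ((n+2).choose (k+1) : ℝ)
      = lagt k * ((n+1).choose k : ℝ) + lagt k * ((n+1).choose (k+1) : ℝ) := by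
    intro k _
    rw [Nat.choose_succ_succ]
    push_cast
    ring
  rw [Nx, Finset.sum_congr rfl h2, Finset.sum_add_distrib]
  have h3 : ∑ k ∈ range (n+2), lagt k * ((n+1).choose k : ℝ) = lag (n+1) := rfl
  have h4 : ∑ k ∈ range (n+2), lagt k * ((n+1).choose (k+1) : ℝ) = Nx n := by
    rw [Finset.sum_range_succ]
    have : (n+1).choose (n+2) = 0 := by
      apply Nat.choose_eq_zero_of_lt; omega
    rw [this, Nx]
    simp
  rw [h3, h4]
  ring

lemma lag_rec (n : ℕ) : ((n:ℝ)+2) * lag (n+2) = 2*((n:ℝ)+1) * lag (n+1) - ((n:ℝ)+1) * lag n := by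
  have a1 := lag_succ (n+1)
  have a0 := lag_succ n
  have b1 := Mx_eq (n+1)
  have b0 := Mx_eq n
  have c0 := Nx_succ n
  push_cast at b1
  nlinarith [a1, a0, b1, b0, c0]

lemma lag_energy (n : ℕ) :
    (lag (n+1))^2 + ((n:ℝ)+1) * (lag (n+1) - lag n)^2 ≤ 1 := by
  induction n with
  | zero => rw [lag_zero, lag_one]; norm_num
  | succ n ih =>
    have hrec := lag_rec n
    set x := lag (n+1)
    set y := lag n
    set z := lag (n+2)
    have hn : ((n:ℝ)+1) > 0 := by positivity
    have key : x^2 + ((n:ℝ)+1)*(x-y)^2 - (z^2 + ((n:ℝ)+2)*(z-x)^2) = z^2/((n:ℝ)+1) := by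
      have hz : z = (2*((n:ℝ)+1)*x - ((n:ℝ)+1)*y)/((n:ℝ)+2) := by
        field_simp
        linarith [hrec]
      rw [hz]
      field_simp
      ring
    have hzn : z^2/((n:ℝ)+1) ≥ 0 := by positivity
    push_cast
    nlinarith [key, hzn, ih]

lemma abs_lag_le_one (n : ℕ) : |lag n| ≤ 1 := by
  cases n with
  | zero => rw [lag_zero]; norm_num
  | succ n =>
    have h := lag_energy n
    have h2 : (lag (n+1))^2 ≤ 1 := by nlinarith [sq_nonneg (lag (n+1) - lag n), h]
    rw [abs_le]
    constructor <;> nlinarith [h2]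

/-- real Taylor coefficient of φ -/
noncomputable def phicoefR (n : ℕ) : ℝ :=
  ∑ k ∈ range (n+1), (-1)^k / ((k.factorial : ℝ) * ((n-k).factorial : ℝ)^2)

lemma phicoefR_eq (n : ℕ) : (n.factorial : ℝ) * phicoefR n = (-1)^n * lag n := by
  rw [phicoefR, Finset.mul_sum]
  have h1 : ∀ k ∈ range (n+1), (n.factorial : ℝ) * ((-1)^k / ((k.factorial : ℝ) * ((n-k).factorial : ℝ)^2))
      = (-1)^k * (n.choose k : ℝ) / ((n-k).factorial : ℝ) := by
    intro k hk
    have hkn : k ≤ n := by simpa using Nat.lt_succ_iff.mp (Finset.mem_range.mp hk)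
    have hfact : (n.choose k) * k.factorial * (n-k).factorial = n.factorial :=
      Nat.choose_mul_factorial_mul_factorial hkn
    have hfact' : ((n.choose k : ℝ)) * (k.factorial : ℝ) * ((n-k).factorial : ℝ) = (n.factorial : ℝ) := by
      exact_mod_cast hfact
    have h2 : (k.factorial : ℝ) ≠ 0 := by exact_mod_cast Nat.factorial_ne_zero k
    have h3 : ((n-k).factorial : ℝ) ≠ 0 := by exact_mod_cast Nat.factorial_ne_zero (n-k)
    field_simp
    linear_combination (-1:ℝ) * hfact'
  rw [Finset.sum_congr rfl h1]
  rw [← Finset.sum_range_reflect]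
  simp only [Nat.add_sub_cancel]
  rw [lag, Finset.mul_sum]
  simp only [lagt]
  refine Finset.sum_congr rfl ?_
  intro k hk
  have hkn : k ≤ n := by simpa using Nat.lt_succ_iff.mp (Finset.mem_range.mp hk)
  have e1 : n - (n - k) = k := Nat.sub_sub_self hkn
  have e2 : n.choose (n-k) = n.choose k := Nat.choose_symm hkn
  rw [e1, e2]
  have e3 : ((-1:ℝ))^(n-k) * (-1:ℝ)^k = (-1:ℝ)^n := by
    rw [← pow_add, Nat.sub_add_cancel hkn]
  calc ((-1:ℝ))^(n-k) * (n.choose k : ℝ) / (k.factorial : ℝ)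
      = ((-1:ℝ))^(n-k) * ((-1:ℝ)^k * (-1:ℝ)^k) * (n.choose k : ℝ) / (k.factorial : ℝ) := by
        rw [← pow_add, ← two_mul, pow_mul]; norm_num
    _ = (-1:ℝ)^n * ((-1)^k / (k.factorial : ℝ) * (n.choose k : ℝ)) := by
        rw [← e3]; ring

lemma abs_phicoefR_le (n : ℕ) : |phicoefR n| ≤ 1 / (n.factorial : ℝ) := by
  have h := phicoefR_eq n
  have hf : (0:ℝ) < (n.factorial : ℝ) := by exact_mod_cast Nat.factorial_pos n
  have he : |phicoefR n| = |(n.factorial : ℝ) * phicoefR n| / (n.factorial : ℝ) := by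
    rw [abs_mul, abs_of_pos hf]
    field_simp
  rw [he, h, abs_mul, _root_.abs_pow, abs_neg, abs_one, one_pow, one_mul]
  gcongr
  exact abs_lag_le_one n

noncomputable def ccoef (n : ℕ) : ℂ := ((phicoefR n : ℝ) : ℂ)

lemma norm_ccoef_le (n : ℕ) : ‖ccoef n‖ ≤ 1 / (n.factorial : ℝ) := by
  rw [ccoef, Complex.norm_real]
  exact abs_phicoefR_le n

lemma summable_pow_fact (r : ℝ) : Summable (fun n : ℕ => r^n / (n.factorial : ℝ)) := by
  simpa using Real.summable_pow_div_factorial r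

/-- the elementary exponential convolution identity -/
lemma antidiag_exp (x y : ℝ) (n : ℕ) :
    ∑ kl ∈ Finset.HasAntidiagonal.antidiagonal n, x^kl.1/(kl.1.factorial : ℝ) * (y^kl.2/(kl.2.factorial : ℝ))
      = (x+y)^n / (n.factorial : ℝ) := by
  rw [Finset.Nat.sum_antidiagonal_eq_sum_range_succ_mk, add_pow, Finset.sum_div]
  refine Finset.sum_congr rfl ?_
  intro k hk
  have hkn : k ≤ n := Nat.lt_succ_iff.mp (Finset.mem_range.mp hk)
  have hfact : ((n.choose k : ℝ)) * (k.factorial : ℝ) * ((n-k).factorial : ℝ) = (n.factorial : ℝ) := by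
    exact_mod_cast Nat.choose_mul_factorial_mul_factorial hkn
  have h2 : (k.factorial : ℝ) ≠ 0 := by exact_mod_cast Nat.factorial_ne_zero k
  have h3 : ((n-k).factorial : ℝ) ≠ 0 := by exact_mod_cast Nat.factorial_ne_zero (n-k)
  have h4 : (n.factorial : ℝ) ≠ 0 := by exact_mod_cast Nat.factorial_ne_zero n
  field_simp
  linear_combination (-(x^k) * y^(n-k)) * hfact

lemma norm_fact_sq (n : ℕ) (w : ℂ) :
    ‖w^n / ((n.factorial : ℂ))^2‖ ≤ ‖w‖^n / (n.factorial : ℝ) := by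
  have h1 : (1:ℝ) ≤ (n.factorial : ℝ) := by exact_mod_cast Nat.one_le_iff_ne_zero.mpr n.factorial_ne_zero
  rw [norm_div, norm_pow, norm_pow, Complex.norm_natCast, sq]
  have h0 : (0:ℝ) < (n.factorial : ℝ) := by exact_mod_cast Nat.factorial_pos n
  calc ‖w‖^n / ((n.factorial:ℝ) * (n.factorial:ℝ)) ≤ ‖w‖^n / ((n.factorial:ℝ) * 1) := by
        gcongr
    _ = ‖w‖^n / (n.factorial : ℝ) := by rw [mul_one]

lemma hasSum_phifun (w : ℂ) : HasSum (fun n => ccoef n * w^n) (phifun w) := by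
  set f : ℕ → ℂ := fun n => (-w)^n / (n.factorial : ℂ) with hfdef
  set g : ℕ → ℂ := fun n => w^n / ((n.factorial : ℂ))^2 with hgdef
  have hf : Summable fun n => ‖f n‖ := by
    refine Summable.of_nonneg_of_le (fun n => norm_nonneg _) (fun n => ?_) (summable_pow_fact ‖w‖)
    simp [hfdef, norm_div, Complex.norm_natCast]
  have hg : Summable fun n => ‖g n‖ :=
    Summable.of_nonneg_of_le (fun n => norm_nonneg _) (fun n => norm_fact_sq n w)
      (summable_pow_fact ‖w‖)
  have hexp : Complex.exp (-w) = ∑' n, f n := by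
    rw [Complex.exp_eq_exp_ℂ, NormedSpace.exp_eq_tsum_div]
  have key : phifun w = ∑' n, ∑ kl ∈ Finset.HasAntidiagonal.antidiagonal n, f kl.1 * g kl.2 := by
    rw [phifun, hexp, J0twoISqrt]
    exact tsum_mul_tsum_eq_tsum_sum_antidiagonal_of_summable_norm hf hg
  have inner : ∀ n, ∑ kl ∈ Finset.HasAntidiagonal.antidiagonal n, f kl.1 * g kl.2 = ccoef n * w^n := by
    intro n
    rw [Finset.Nat.sum_antidiagonal_eq_sum_range_succ_mk]
    have hc : ccoef n = ∑ k ∈ range (n+1), ((-1:ℂ))^k / ((k.factorial : ℂ) * ((n-k).factorial : ℂ)^2) := by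
      rw [ccoef, phicoefR]
      push_cast
      rfl
    rw [hc, Finset.sum_mul]
    refine Finset.sum_congr rfl ?_
    intro k hk
    have hkn : k ≤ n := Nat.lt_succ_iff.mp (Finset.mem_range.mp hk)
    have hw : w^k * w^(n-k) = w^n := by
      rw [← pow_add, Nat.add_sub_cancel' hkn]
    simp only [hfdef, hgdef]
    rw [neg_pow, ← hw]
    ring
  have hsum : Summable (fun n => ccoef n * w^n) := by
    refine Summable.of_norm ?_
    refine Summable.of_nonneg_of_le (fun n => norm_nonneg _) (fun n => ?_) (summable_pow_fact ‖w‖)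
    rw [norm_mul, norm_pow]
    calc ‖ccoef n‖ * ‖w‖^n ≤ (1/(n.factorial:ℝ)) * ‖w‖^n := by
          gcongr; exact norm_ccoef_le n
      _ = ‖w‖^n / (n.factorial : ℝ) := by ring
  have : ∑' n, ccoef n * w^n = phifun w := by
    rw [key]; exact tsum_congr fun n => (inner n).symm
  exact this ▸ hsum.hasSum

lemma prod_hasSum (S : Finset ℕ) (hpos : ∀ p ∈ S, 0 < p) :
    ∃ D : ℕ → ℂ,
      (∀ n, ‖D n‖ ≤ (∑ p ∈ S, (1:ℝ)/p)^n / (n.factorial : ℝ)) ∧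
      (∀ z : ℂ, HasSum (fun n => D n * z^n) (∏ p ∈ S, phifun (z / (p:ℂ)))) := by
  induction S using Finset.induction_on with
  | empty =>
    refine ⟨fun n => if n = 0 then 1 else 0, ?_, ?_⟩
    · intro n
      cases n with
      | zero => simp
      | succ n => simp [Nat.factorial_pos]
    · intro z
      have : (fun n : ℕ => (if n = 0 then (1:ℂ) else 0) * z^n)
          = fun n : ℕ => if n = 0 then (1:ℂ) else 0 := by
        funext n
        cases n with
        | zero => simp
        | succ n => simp
      rw [this, Finset.prod_empty]
      exact hasSum_ite_eq 0 1
  | @insert a S ha ih =>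
    have hapos : 0 < a := hpos a (Finset.mem_insert_self a S)
    have hS : ∀ p ∈ S, 0 < p := fun p hp => hpos p (Finset.mem_insert_of_mem hp)
    obtain ⟨D, hDb, hDs⟩ := ih hS
    set σ : ℝ := ∑ p ∈ S, (1:ℝ)/p with hσ
    have hσ0 : 0 ≤ σ := Finset.sum_nonneg fun p _ => by positivity
    have ha0 : (0:ℝ) < (a:ℝ) := by exact_mod_cast hapos
    have haC : ((a:ℂ)) ≠ 0 := by
      simp only [ne_eq, Nat.cast_eq_zero]
      omega
    refine ⟨fun n => ∑ kl ∈ Finset.HasAntidiagonal.antidiagonal n, (ccoef kl.1 / (a:ℂ)^kl.1) * D kl.2, ?_, ?_⟩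
    · intro n
      have hsum : ∑ p ∈ insert a S, (1:ℝ)/p = 1/(a:ℝ) + σ := by
        rw [Finset.sum_insert ha]
      rw [hsum]
      calc ‖∑ kl ∈ Finset.HasAntidiagonal.antidiagonal n, (ccoef kl.1 / (a:ℂ)^kl.1) * D kl.2‖
          ≤ ∑ kl ∈ Finset.HasAntidiagonal.antidiagonal n, ‖(ccoef kl.1 / (a:ℂ)^kl.1) * D kl.2‖ :=
            norm_sum_le _ _
        _ ≤ ∑ kl ∈ Finset.HasAntidiagonal.antidiagonal n,
              (1/(a:ℝ))^kl.1/(kl.1.factorial : ℝ) * (σ^kl.2/(kl.2.factorial : ℝ)) := by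
            refine Finset.sum_le_sum ?_
            intro kl _
            rw [norm_mul, norm_div, norm_pow, Complex.norm_natCast]
            have h1 : ‖ccoef kl.1‖ / (a:ℝ)^kl.1 ≤ (1/(kl.1.factorial : ℝ)) * (1/(a:ℝ))^kl.1 := by
              rw [div_pow, one_pow, one_div ((a:ℝ)^kl.1)]
              rw [div_eq_mul_inv]
              gcongr
              exact norm_ccoef_le kl.1
            calc ‖ccoef kl.1‖ / (a:ℝ)^kl.1 * ‖D kl.2‖
                ≤ ((1/(kl.1.factorial : ℝ)) * (1/(a:ℝ))^kl.1) * (σ^kl.2/(kl.2.factorial : ℝ)) := by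
                  gcongr
                  exact hDb kl.2
              _ = (1/(a:ℝ))^kl.1/(kl.1.factorial : ℝ) * (σ^kl.2/(kl.2.factorial : ℝ)) := by ring
        _ = (1/(a:ℝ) + σ)^n / (n.factorial : ℝ) := antidiag_exp _ _ n
    · intro z
      set f : ℕ → ℂ := fun i => ccoef i * (z/(a:ℂ))^i with hfdef
      set g : ℕ → ℂ := fun j => D j * z^j with hgdef
      have hf : Summable fun i => ‖f i‖ := by
        refine Summable.of_nonneg_of_le (fun i => norm_nonneg _) (fun i => ?_)
          (summable_pow_fact ‖z/(a:ℂ)‖)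
        rw [norm_mul, norm_pow]
        calc ‖ccoef i‖ * ‖z/(a:ℂ)‖^i ≤ (1/(i.factorial:ℝ)) * ‖z/(a:ℂ)‖^i := by
              gcongr; exact norm_ccoef_le i
          _ = ‖z/(a:ℂ)‖^i / (i.factorial : ℝ) := by ring
      have hg : Summable fun j => ‖g j‖ := by
        refine Summable.of_nonneg_of_le (fun j => norm_nonneg _) (fun j => ?_)
          (summable_pow_fact (σ * ‖z‖))
        rw [norm_mul, norm_pow]
        calc ‖D j‖ * ‖z‖^j ≤ (σ^j/(j.factorial:ℝ)) * ‖z‖^j := by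
              gcongr; exact hDb j
          _ = (σ*‖z‖)^j / (j.factorial : ℝ) := by rw [mul_pow]; ring
      have h1 : phifun (z/(a:ℂ)) = ∑' i, f i := (hasSum_phifun (z/(a:ℂ))).tsum_eq.symm
      have h2 : (∏ p ∈ S, phifun (z / (p:ℂ))) = ∑' j, g j := (hDs z).tsum_eq.symm
      have key : (∏ p ∈ insert a S, phifun (z / (p:ℂ)))
          = ∑' n, ∑ kl ∈ Finset.HasAntidiagonal.antidiagonal n, f kl.1 * g kl.2 := by
        rw [Finset.prod_insert ha, h1, h2]
        exact tsum_mul_tsum_eq_tsum_sum_antidiagonal_of_summable_norm hf hg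
      have inner : ∀ n, ∑ kl ∈ Finset.HasAntidiagonal.antidiagonal n, f kl.1 * g kl.2
          = (∑ kl ∈ Finset.HasAntidiagonal.antidiagonal n, (ccoef kl.1 / (a:ℂ)^kl.1) * D kl.2) * z^n := by
        intro n
        rw [Finset.sum_mul]
        refine Finset.sum_congr rfl ?_
        intro kl hkl
        have hkl' : kl.1 + kl.2 = n := Finset.HasAntidiagonal.mem_antidiagonal.mp hkl
        have hz : z^kl.1 * z^kl.2 = z^n := by rw [← pow_add, hkl']
        simp only [hfdef, hgdef]
        rw [div_pow, ← hz]
        ring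
      have hsum : Summable (fun n => (∑ kl ∈ Finset.HasAntidiagonal.antidiagonal n, (ccoef kl.1 / (a:ℂ)^kl.1) * D kl.2) * z^n) := by
        rw [← funext inner]
        exact summable_sum_mul_antidiagonal_of_summable_norm' hf hf.of_norm hg hg.of_norm
      have : ∑' n, (∑ kl ∈ Finset.HasAntidiagonal.antidiagonal n, (ccoef kl.1 / (a:ℂ)^kl.1) * D kl.2) * z^n
          = ∏ p ∈ insert a S, phifun (z / (p:ℂ)) := by
        rw [key]
        exact tsum_congr fun n => (inner n).symm
      exact this ▸ hsum.hasSum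

end IK

open IK in
/-- **Lemma 4(a)** (Ivić–Korolev). `|Φ_n| ≤ σⁿ/n!` for every `n ≥ 0`. -/
theorem PhiCoef_le_sigma_pow :
    ∀ y : ℝ, 2 < y → ∀ n : ℕ,
      ‖PhiCoef y n‖ ≤ (sigmay y) ^ n / (n.factorial : ℝ) := by
  intro y _ n
  have hpos : ∀ p ∈ primesLe y, 0 < p := by
    intro p hp
    have := (Finset.mem_filter.mp hp).2
    exact this.pos
  obtain ⟨D, hDb, hDs⟩ := prod_hasSum (primesLe y) hpos
  have hσ : (∑ p ∈ primesLe y, (1:ℝ)/p) = sigmay y := rfl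
  rw [hσ] at hDb
  -- the power series
  set P : FormalMultilinearSeries ℂ ℂ ℂ := FormalMultilinearSeries.ofScalars ℂ D with hP
  have hPn : ∀ m, ‖P m‖ ≤ ‖D m‖ := by
    intro m
    rw [hP, FormalMultilinearSeries.ofScalars_norm]
  have hσ0 : 0 ≤ sigmay y := Finset.sum_nonneg fun p _ => by positivity
  have hrad : (1:ENNReal) ≤ P.radius := by
    have : Summable fun m => ‖P m‖ * (1:ℝ)^m := by
      refine Summable.of_nonneg_of_le (fun m => by positivity) (fun m => ?_)
        (summable_pow_fact (sigmay y))
      rw [one_pow, mul_one]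
      exact (hPn m).trans (hDb m)
    exact_mod_cast P.le_radius_of_summable_norm (r := 1) (by simpa using this)
  have hball : HasFPowerSeriesOnBall (Phifun y) P 0 1 := by
    refine ⟨hrad, by norm_num, ?_⟩
    intro w _
    have : ∀ m, P m (fun _ => w) = D m * w^m := by
      intro m
      rw [hP, FormalMultilinearSeries.ofScalars_apply_eq]
      simp [smul_eq_mul]
    rw [zero_add]
    have h := hDs w
    rw [show (∏ p ∈ primesLe y, phifun (w / (p:ℂ))) = Phifun y w from rfl] at h
    simpa [this] using h
  have hderiv : iteratedDeriv n (Phifun y) 0 = (n.factorial : ℂ) * D n := by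
    rw [iteratedDeriv_eq_iteratedFDeriv]
    have h := hball.factorial_smul (1:ℂ) n
    rw [← h]
    have : P n (fun _ => (1:ℂ)) = D n := by
      rw [hP, FormalMultilinearSeries.ofScalars_apply_eq]
      simp
    rw [this, nsmul_eq_mul]
  have hfC : ((n.factorial : ℂ)) ≠ 0 := by
    exact_mod_cast Nat.cast_ne_zero.mpr n.factorial_ne_zero
  have hPhi : PhiCoef y n = D n := by
    rw [PhiCoef, hderiv]
    field_simp
  rw [hPhi]
  exact hDb n
end
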